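/- Let a > 1, b > 1 and k ≥ 0 be real numbers, and set c = ln a / ln b. For t ≥ 0 define S₁(t) = Σ_{i=1}^{∞} i^{−k}·a^{−i}·exp(−b^{−i}·t) (a convergent series). Then liminf_{t→∞} S₁(t)·t^{c}·(ln t)^{k} ≥ a^{−1}·(ln b)^{k−1}·Γ(c) and limsup_{t→∞} S₁(t)·t^{c}·(ln t)^{k} ≤ a·(ln b)^{k−1}·Γ(c), where Γ denotes the (real) Gamma function. -/

import Mathlib

open Filter MeasureTheory Set Topology

lemma contG {c k D : ℝ} : ContinuousOn
    (fun u : ℝ => Real.log (D / u) ^ (-k) * u ^ (c - 1) * Real.exp (-u)) {u : ℝ | 0 < u ∧ u < D} := by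
  have hs : ∀ u ∈ {u : ℝ | 0 < u ∧ u < D}, Real.log (D / u) ≠ 0 ∨ (0:ℝ) ≤ -k := by
    intro u hu
    left
    have : (1:ℝ) < D / u := (lt_div_iff₀ hu.1).mpr (by linarith [hu.2])
    exact ne_of_gt (Real.log_pos this)
  refine ContinuousOn.mul (ContinuousOn.mul ?_ ?_) ?_
  · refine ContinuousOn.rpow_const ?_ hs
    refine Real.continuousOn_log.comp (continuousOn_const.div continuousOn_id ?_) ?_
    · intro u hu; exact ne_of_gt hu.1
    · intro u hu
      simp only [mem_setOf_eq] at hu ⊢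
      exact ne_of_gt (div_pos (lt_trans hu.1 hu.2) hu.1)
  · exact continuousOn_id.rpow_const (fun u hu => Or.inl (ne_of_gt hu.1))
  · exact (Real.continuous_exp.comp continuous_neg).continuousOn

/-- Integrability of the Gamma-like integrand with logarithmic factor. -/
lemma intG {c k lb : ℝ} (hc : 0 < c) (hk : 0 ≤ k) {D M : ℝ} (hlb : 0 < lb) (hMD : M ≤ D)
    (h : ∀ u ∈ Ioo (0:ℝ) M, lb ≤ Real.log (D / u)) :
    IntegrableOn (fun u => Real.log (D / u) ^ (-k) * u ^ (c - 1) * Real.exp (-u))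
      (Ioo 0 M) := by
  have hmeas : AEStronglyMeasurable
      (fun u : ℝ => Real.log (D / u) ^ (-k) * u ^ (c - 1) * Real.exp (-u))
      (volume.restrict (Ioo 0 M)) := by
    refine (contG.mono ?_).aestronglyMeasurable measurableSet_Ioo
    intro u hu
    constructor
    · exact hu.1
    · calc u < M := hu.2
        _ ≤ D := hMD
  have hbig : IntegrableOn (fun u : ℝ => lb ^ (-k) * (Real.exp (-u) * u ^ (c - 1))) (Ioo 0 M) :=
    (((Real.GammaIntegral_convergent hc).mono_set Ioo_subset_Ioi_self)).const_mul _
  refine hbig.mono' hmeas ?_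
  rw [ae_restrict_iff' measurableSet_Ioo]
  filter_upwards with u hu
  obtain ⟨hu0, huM⟩ := hu
  have hlog : lb ≤ Real.log (D / u) := h u ⟨hu0, huM⟩
  have h1 : (0:ℝ) < Real.log (D / u) := lt_of_lt_of_le hlb hlog
  have hnn : 0 ≤ Real.log (D / u) ^ (-k) * u ^ (c - 1) * Real.exp (-u) := by
    positivity
  rw [Real.norm_of_nonneg hnn]
  have hb1 : Real.log (D / u) ^ (-k) ≤ lb ^ (-k) :=
    Real.rpow_le_rpow_of_nonpos hlb hlog (neg_nonpos.mpr hk)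
  calc Real.log (D / u) ^ (-k) * u ^ (c - 1) * Real.exp (-u)
      ≤ lb ^ (-k) * u ^ (c - 1) * Real.exp (-u) := by
        apply mul_le_mul_of_nonneg_right _ (Real.exp_nonneg _)
        exact mul_le_mul_of_nonneg_right hb1 (Real.rpow_nonneg hu0.le _)
    _ = lb ^ (-k) * (Real.exp (-u) * u ^ (c - 1)) := by ring

lemma intG' {L c k C : ℝ} (hL : 0 < L) (hc : 0 < c) (hk : 0 ≤ k) (hC : 0 < C) :
    IntegrableOn (fun u : ℝ => Real.log (C / u) ^ (-k) * u ^ (c - 1) * Real.exp (-u))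
      (Ioo 0 (C * Real.exp (-(L/2)))) := by
  apply intG hc hk (half_pos hL)
  · calc C * Real.exp (-(L/2)) ≤ C * 1 :=
        mul_le_mul_of_nonneg_left (Real.exp_le_one_iff.mpr (by linarith)) hC.le
      _ = C := mul_one _
  · intro u hu
    have hu0 := hu.1
    have huM := hu.2
    have h : Real.exp (L/2) ≤ C / u := by
      rw [le_div_iff₀ hu0]
      calc Real.exp (L/2) * u ≤ Real.exp (L/2) * (C * Real.exp (-(L/2))) :=
            mul_le_mul_of_nonneg_left huM.le (Real.exp_pos _).le
        _ = C * (Real.exp (L/2) * Real.exp (-(L/2))) := by ring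
        _ = C := by rw [← Real.exp_add]; simp
    calc L/2 = Real.log (Real.exp (L/2)) := (Real.log_exp _).symm
      _ ≤ Real.log (C / u) := Real.log_le_log (Real.exp_pos _) h

lemma contL {c k L C : ℝ} : ContinuousOn
    (fun x : ℝ => x ^ (-k) * Real.exp (-(c * L) * x) * Real.exp (-(C * Real.exp (-(L * x)))))
    (Ioi 0) := by
  have h1 : ContinuousOn (fun x : ℝ => x ^ (-k)) (Ioi (0:ℝ)) :=
    continuousOn_id.rpow_const (fun x hx => Or.inl (ne_of_gt hx))
  have h2 : Continuous (fun x : ℝ => Real.exp (-(c * L) * x)) := by continuity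
  have h3 : Continuous (fun x : ℝ => Real.exp (-(C * Real.exp (-(L * x))))) := by continuity
  exact (h1.mul h2.continuousOn).mul h3.continuousOn

/-- Integrability of the exponential-side integrand. -/
lemma intL {c k L C : ℝ} (hcL : 0 < c * L) (hk : 0 ≤ k) (hC : 0 ≤ C) :
    IntegrableOn
      (fun x : ℝ => x ^ (-k) * Real.exp (-(c * L) * x) * Real.exp (-(C * Real.exp (-(L * x)))))
      (Ioi 1) := by
  have hmeas : AEStronglyMeasurable
      (fun x : ℝ => x ^ (-k) * Real.exp (-(c * L) * x) * Real.exp (-(C * Real.exp (-(L * x)))))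
      (volume.restrict (Ioi 1)) :=
    ((contL (c := c) (k := k) (L := L) (C := C)).mono (fun x (hx : (1:ℝ) < x) => lt_trans one_pos hx)).aestronglyMeasurable measurableSet_Ioi
  have hbig : IntegrableOn (fun x : ℝ => Real.exp (-(c * L) * x)) (Ioi 1) :=
    exp_neg_integrableOn_Ioi 1 hcL
  refine hbig.mono' hmeas ?_
  rw [ae_restrict_iff' measurableSet_Ioi]
  filter_upwards with x hx
  have hx0 : (0:ℝ) < x := lt_trans one_pos hx
  have hnn : 0 ≤ x ^ (-k) * Real.exp (-(c * L) * x) * Real.exp (-(C * Real.exp (-(L * x)))) := by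
    positivity
  rw [Real.norm_of_nonneg hnn]
  have h1 : x ^ (-k) ≤ 1 := Real.rpow_le_one_of_one_le_of_nonpos hx.le (neg_nonpos.mpr hk)
  have h2 : Real.exp (-(C * Real.exp (-(L * x)))) ≤ 1 := by
    apply Real.exp_le_one_iff.mpr
    simp only [neg_nonpos]
    positivity
  calc x ^ (-k) * Real.exp (-(c * L) * x) * Real.exp (-(C * Real.exp (-(L * x))))
      ≤ 1 * Real.exp (-(c * L) * x) * 1 := by
        apply mul_le_mul _ h2 (Real.exp_nonneg _) (by positivity)
        exact mul_le_mul_of_nonneg_right h1 (Real.exp_nonneg _)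
    _ = Real.exp (-(c * L) * x) := by ring

section
variable {c k L C : ℝ}

/-- Change of variables `u = C e^{-Lx}` for the improper integral on `(1,∞)`. -/
lemma subst (hL : 0 < L) (hc : 0 < c) (hk : 0 ≤ k) (hC : 0 < C)
    (hInt : IntegrableOn
      (fun x : ℝ => x ^ (-k) * Real.exp (-(c * L) * x) * Real.exp (-(C * Real.exp (-(L * x)))))
      (Ioi 1))
    (hIntG : IntegrableOn
      (fun u : ℝ => Real.log (C / u) ^ (-k) * u ^ (c - 1) * Real.exp (-u))
      (Ioo 0 (C * Real.exp (-(L/2)))))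
    (hcontG : ContinuousOn
      (fun u : ℝ => Real.log (C / u) ^ (-k) * u ^ (c - 1) * Real.exp (-u))
      {u : ℝ | 0 < u ∧ u < C}) :
    ∫ x in Ioi (1:ℝ), x ^ (-k) * Real.exp (-(c * L) * x) * Real.exp (-(C * Real.exp (-(L * x)))) =
    L ^ (k - 1) * C ^ (-c) *
      ∫ u in Ioo (0:ℝ) (C * Real.exp (-L)),
        Real.log (C / u) ^ (-k) * u ^ (c - 1) * Real.exp (-u) := by
  set G : ℝ → ℝ := fun u => Real.log (C / u) ^ (-k) * u ^ (c - 1) * Real.exp (-u) with hG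
  set H : ℝ → ℝ := fun u => L ^ (k - 1) * C ^ (-c) * G u with hH
  set φ : ℝ → ℝ := fun x => C * Real.exp (-(L * x)) with hφ
  set ℓ : ℝ → ℝ :=
    fun x => x ^ (-k) * Real.exp (-(c * L) * x) * Real.exp (-(C * Real.exp (-(L * x)))) with hℓ
  have hφpos : ∀ x, 0 < φ x := fun x => mul_pos hC (Real.exp_pos _)
  have hφlt : ∀ x : ℝ, 0 < x → φ x < C := by
    intro x hx
    have : Real.exp (-(L * x)) < 1 := by
      rw [Real.exp_lt_one_iff]
      have : 0 < L * x := mul_pos hL hx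
      linarith
    calc φ x < C * 1 := by exact (mul_lt_mul_iff_right₀ hC).mpr this
      _ = C := mul_one C
  have hφanti : ∀ x y : ℝ, x ≤ y → φ y ≤ φ x := by
    intro x y hxy
    have : Real.exp (-(L * y)) ≤ Real.exp (-(L * x)) := by
      apply Real.exp_le_exp.mpr
      nlinarith
    exact mul_le_mul_of_nonneg_left this hC.le
  -- the key pointwise identity
  have hpoint : ∀ x : ℝ, 0 < x → ℓ x = (L * φ x) * H (φ x) := by
    intro x hx
    have hE : (0:ℝ) < Real.exp (-(L * x)) := Real.exp_pos _
    have hlog : Real.log (C / φ x) = L * x := by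
      rw [hφ]
      simp only []
      rw [mul_comm C (Real.exp (-(L * x)))]
      rw [div_mul_eq_div_div_swap, div_self (ne_of_gt hC)]
      rw [one_div, ← Real.exp_neg, Real.log_exp, neg_neg]
    have h1 : Real.log (C / φ x) ^ (-k) = L ^ (-k) * x ^ (-k) := by
      rw [hlog, Real.mul_rpow hL.le hx.le]
    have h2 : (φ x) ^ (c - 1) = C ^ (c - 1) * Real.exp (-(L * x) * (c - 1)) := by
      rw [hφ]
      simp only []
      rw [Real.mul_rpow hC.le hE.le, Real.exp_mul]
    have hLpow : L * (L ^ (k - 1) * L ^ (-k)) = 1 := by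
      rw [← Real.rpow_add hL, show k - 1 + -k = (-1:ℝ) by ring, Real.rpow_neg_one]
      field_simp
    have hCpow : C ^ (-c) * C ^ (c - 1) * C = 1 := by
      rw [← Real.rpow_add hC, show -c + (c - 1) = (-1:ℝ) by ring, Real.rpow_neg_one]
      field_simp
    have hexp : Real.exp (-(L * x)) * Real.exp (-(L * x) * (c - 1)) =
        Real.exp (-(c * L) * x) := by
      rw [← Real.exp_add]
      ring_nf
    have hexp2 : Real.exp (-(φ x)) = Real.exp (-(C * Real.exp (-(L * x)))) := by rw [hφ]
    rw [hH, hG]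
    simp only []
    rw [h1, h2, hexp2, hℓ]
    simp only [hφ]
    rw [← hexp]
    linear_combination
      (-(C ^ (-c) * C ^ (c - 1) * C *
        (x ^ (-k) * Real.exp (-(L * x) * (c - 1)) *
          Real.exp (-(C * Real.exp (-(L * x)))) * Real.exp (-(L * x))))) * hLpow +
      (-(x ^ (-k) * Real.exp (-(L * x) * (c - 1)) *
          Real.exp (-(C * Real.exp (-(L * x)))) * Real.exp (-(L * x)))) * hCpow
  -- interval substitution for each N
  have key : ∀ N : ℕ, ∫ x in (1:ℝ)..((N:ℝ) + 1), ℓ x =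
      ∫ u in Ioc (φ ((N:ℝ) + 1)) (φ 1), H u := by
    intro N
    have hle : (1:ℝ) ≤ (N:ℝ) + 1 := by
      have := Nat.cast_nonneg (α := ℝ) N
      linarith
    have huIcc : uIcc (1:ℝ) ((N:ℝ) + 1) = Icc (1:ℝ) ((N:ℝ) + 1) := uIcc_of_le hle
    have hderiv : ∀ x ∈ uIcc (1:ℝ) ((N:ℝ) + 1), HasDerivAt φ (-(L * φ x)) x := by
      intro x _
      have h0 : HasDerivAt (fun x : ℝ => L * x) L x := by
        simpa using (hasDerivAt_id x).const_mul L
      have h1 : HasDerivAt (fun x : ℝ => -(L * x)) (-L) x := h0.neg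
      have h2 := (h1.exp).const_mul C
      refine h2.congr_deriv ?_
      simp only [hφ]
      ring
    have hcont' : ContinuousOn (fun x => -(L * φ x)) (uIcc (1:ℝ) ((N:ℝ) + 1)) := by
      have : Continuous fun x : ℝ => -(L * (C * Real.exp (-(L * x)))) := by continuity
      exact this.continuousOn
    have himg : ∀ x ∈ uIcc (1:ℝ) ((N:ℝ) + 1), φ x ∈ {u : ℝ | 0 < u ∧ u < C} := by
      intro x hx
      rw [huIcc] at hx
      exact ⟨hφpos x, hφlt x (by linarith [hx.1])⟩
    have hgcont : ContinuousOn (fun u => -(H u)) (φ '' uIcc (1:ℝ) ((N:ℝ) + 1)) := by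
      have : ContinuousOn H {u : ℝ | 0 < u ∧ u < C} := by
        rw [hH]
        exact continuousOn_const.mul hcontG
      exact (this.mono (image_subset_iff.mpr himg)).neg
    have hsub := intervalIntegral.integral_comp_smul_deriv' hderiv hcont' hgcont
    have hptw : ∀ x ∈ uIcc (1:ℝ) ((N:ℝ) + 1),
        ℓ x = (fun x => -(L * φ x) • (fun u => -(H u)) (φ x)) x := by
      intro x hx
      rw [huIcc] at hx
      have := hpoint x (by linarith [hx.1])
      simp only [smul_eq_mul]
      rw [this]; ring
    calc ∫ x in (1:ℝ)..((N:ℝ) + 1), ℓ x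
        = ∫ x in (1:ℝ)..((N:ℝ) + 1), -(L * φ x) • (fun u => -(H u)) (φ x) :=
          intervalIntegral.integral_congr hptw
      _ = ∫ u in (φ 1)..(φ ((N:ℝ) + 1)), -(H u) := hsub
      _ = ∫ u in (φ ((N:ℝ) + 1))..(φ 1), H u := by
          rw [intervalIntegral.integral_symm, intervalIntegral.integral_neg, neg_neg]
      _ = ∫ u in Ioc (φ ((N:ℝ) + 1)) (φ 1), H u := by
          rw [intervalIntegral.integral_of_le (hφanti 1 ((N:ℝ) + 1) hle)]
  -- integrability of H on Ioc 0 (φ 1)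
  have hsubset : Ioc (0:ℝ) (φ 1) ⊆ Ioo 0 (C * Real.exp (-(L/2))) := by
    intro u hu
    refine ⟨hu.1, lt_of_le_of_lt hu.2 ?_⟩
    simp only [hφ, mul_one]
    apply (mul_lt_mul_iff_right₀ hC).mpr
    apply Real.exp_lt_exp.mpr
    linarith
  have hHint : IntegrableOn H (Ioc 0 (φ 1)) := by
    rw [hH]
    exact (hIntG.mono_set hsubset).const_mul _
  -- limits
  have hltend : Tendsto (fun N : ℕ => ∫ x in (1:ℝ)..((N:ℝ) + 1), ℓ x) atTop
      (𝓝 (∫ x in Ioi 1, ℓ x)) :=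
    intervalIntegral_tendsto_integral_Ioi 1 hInt
      (tendsto_atTop_add_const_right _ 1 tendsto_natCast_atTop_atTop)
  have hrtend : Tendsto (fun N : ℕ => ∫ u in Ioc (φ ((N:ℝ) + 1)) (φ 1), H u) atTop
      (𝓝 (∫ u in Ioc 0 (φ 1), H u)) := by
    have hmono : Monotone fun N : ℕ => Ioc (φ ((N:ℝ) + 1)) (φ 1) := by
      intro n m hnm
      apply Ioc_subset_Ioc_left
      apply hφanti
      exact_mod_cast Nat.add_le_add_right hnm 1
    have hunion : (⋃ N : ℕ, Ioc (φ ((N:ℝ) + 1)) (φ 1)) = Ioc 0 (φ 1) := by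
      apply Subset.antisymm
      · exact iUnion_subset fun N => Ioc_subset_Ioc_left (hφpos _).le
      · intro u hu
        have h1 : Tendsto (fun N : ℕ => (N:ℝ) + 1) atTop atTop :=
          tendsto_atTop_add_const_right _ 1 tendsto_natCast_atTop_atTop
        have h2 : Tendsto (fun N : ℕ => L * ((N:ℝ) + 1)) atTop atTop := h1.const_mul_atTop hL
        have h3 : Tendsto (fun N : ℕ => -(L * ((N:ℝ) + 1))) atTop atBot :=
          tendsto_neg_atBot_iff.mpr h2
        have h4 : Tendsto (fun N : ℕ => Real.exp (-(L * ((N:ℝ) + 1)))) atTop (𝓝 0) :=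
          Real.tendsto_exp_atBot.comp h3
        have htend0 : Tendsto (fun N : ℕ => φ ((N:ℝ) + 1)) atTop (𝓝 0) := by
          rw [hφ]
          simpa using h4.const_mul C
        obtain ⟨N, hN⟩ := (htend0.eventually (eventually_lt_nhds hu.1)).exists
        exact mem_iUnion.mpr ⟨N, hN, hu.2⟩
    have := tendsto_setIntegral_of_monotone
      (fun N : ℕ => measurableSet_Ioc) hmono (hunion ▸ hHint)
    rwa [hunion] at this
  have heq : ∫ x in Ioi 1, ℓ x = ∫ u in Ioc 0 (φ 1), H u := by
    apply tendsto_nhds_unique (hltend.congr (fun N => key N)) hrtend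
  have hφ1 : φ 1 = C * Real.exp (-L) := by rw [hφ]; simp
  rw [heq, integral_Ioc_eq_integral_Ioo, hφ1, hH]
  exact MeasureTheory.integral_const_mul _ _
end


section
variable {L c k β : ℝ}

lemma mainLimit (hL : 0 < L) (hc : 0 < c) (hk : 0 ≤ k) (hβ : 0 < β) :
    Tendsto (fun t : ℝ => Real.log t ^ k *
      ∫ u in Ioo (0:ℝ) (β * t * Real.exp (-L)),
        Real.log (β * t / u) ^ (-k) * u ^ (c - 1) * Real.exp (-u)) atTop
      (𝓝 (Real.Gamma c)) := by
  set σ : ℝ → ℝ := fun t => t ^ (1/2 : ℝ) with hσ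
  set G : ℝ → ℝ → ℝ :=
    fun t u => Real.log (β * t / u) ^ (-k) * u ^ (c - 1) * Real.exp (-u) with hGdef
  set F : ℝ → ℝ → ℝ := fun t u => Real.log t ^ k * G t u with hFdef
  set A : ℝ → ℝ := fun t => ∫ u in Ioo (0:ℝ) (σ t), F t u with hAdef
  set B : ℝ → ℝ := fun t => ∫ u in Ico (σ t) (β * t * Real.exp (-L)), F t u with hBdef
  -- eventual basic facts
  have hσpos : ∀ t : ℝ, 0 < t → 0 < σ t := fun t ht => Real.rpow_pos_of_pos ht _
  have hσσ : ∀ t : ℝ, 0 < t → σ t * σ t = t := by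
    intro t ht
    rw [hσ]
    simp only []
    rw [← Real.rpow_add ht]
    norm_num
  have ev1 : ∀ᶠ t : ℝ in atTop, 1 < t := eventually_gt_atTop 1
  have ev2 : ∀ᶠ t : ℝ in atTop, σ t ≤ β * t * Real.exp (-L) := by
    have hK : 0 < β * Real.exp (-L) := mul_pos hβ (Real.exp_pos _)
    have h1 : Tendsto (fun t : ℝ => (β * Real.exp (-L)) * σ t) atTop atTop :=
      (tendsto_rpow_atTop one_half_pos).const_mul_atTop hK
    filter_upwards [ev1, h1.eventually_ge_atTop 1] with t ht h1t
    have ht0 : (0:ℝ) < t := by linarith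
    have := mul_le_mul_of_nonneg_right h1t (hσpos t ht0).le
    calc σ t = 1 * σ t := (one_mul _).symm
      _ ≤ β * Real.exp (-L) * σ t * σ t := this
      _ = β * (σ t * σ t) * Real.exp (-L) := by ring
      _ = β * t * Real.exp (-L) := by rw [hσσ t ht0]
  have ev3 : ∀ᶠ t : ℝ in atTop, 0 ≤ Real.log β + (1/4) * Real.log t ∧ 1 ≤ Real.log t := by
    have h1 := Real.tendsto_log_atTop.eventually_ge_atTop (max 1 (4 * (- Real.log β)))
    filter_upwards [h1] with t ht
    have h2 := le_trans (le_max_left _ _) ht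
    have h3 := le_trans (le_max_right _ _) ht
    exact ⟨by linarith, h2⟩
  -- integrability of F t on Ioo 0 (β t e^{-L/2})
  have hFint : ∀ᶠ t : ℝ in atTop, IntegrableOn (F t) (Ioo 0 (β * t * Real.exp (-(L/2)))) := by
    filter_upwards [ev1] with t ht
    have htβ : 0 < β * t := mul_pos hβ (by linarith)
    have hIG : IntegrableOn (G t) (Ioo 0 (β * t * Real.exp (-(L/2)))) := by
      apply intG hc hk (half_pos hL)
      · calc β * t * Real.exp (-(L/2)) ≤ β * t * 1 := by
              apply mul_le_mul_of_nonneg_left _ htβ.le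
              apply Real.exp_le_one_iff.mpr
              linarith
          _ = β * t := mul_one _
      · intro u hu
        have hu0 := hu.1
        have huM := hu.2
        have : Real.exp (L/2) ≤ β * t / u := by
          rw [le_div_iff₀ hu0]
          calc Real.exp (L/2) * u ≤ Real.exp (L/2) * (β * t * Real.exp (-(L/2))) := by
                apply mul_le_mul_of_nonneg_left huM.le (Real.exp_pos _).le
            _ = β * t := by
                rw [show Real.exp (L/2) * (β * t * Real.exp (-(L/2)))
                    = β * t * (Real.exp (L/2) * Real.exp (-(L/2))) by ring,
                  ← Real.exp_add]
                simp
        calc L/2 = Real.log (Real.exp (L/2)) := (Real.log_exp _).symm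
          _ ≤ Real.log (β * t / u) := Real.log_le_log (Real.exp_pos _) this
    exact hIG.const_mul _
  -- splitting
  have hsplit : ∀ᶠ t : ℝ in atTop,
      Real.log t ^ k * ∫ u in Ioo (0:ℝ) (β * t * Real.exp (-L)), G t u = A t + B t := by
    filter_upwards [ev1, ev2, hFint] with t ht hσM hFi
    have ht0 : (0:ℝ) < t := by linarith
    have hσ0 : 0 < σ t := hσpos t ht0
    have hML : β * t * Real.exp (-L) ≤ β * t * Real.exp (-(L/2)) := by
      apply mul_le_mul_of_nonneg_left _ (mul_pos hβ ht0).le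
      apply Real.exp_le_exp.mpr; linarith
    have hunion : Ioo (0:ℝ) (σ t) ∪ Ico (σ t) (β * t * Real.exp (-L))
        = Ioo (0:ℝ) (β * t * Real.exp (-L)) := Ioo_union_Ico_eq_Ioo hσ0 hσM
    have hdisj : Disjoint (Ioo (0:ℝ) (σ t)) (Ico (σ t) (β * t * Real.exp (-L))) := by
      apply Set.disjoint_left.mpr
      intro u hu hu2
      exact absurd hu2.1 (not_le.mpr hu.2)
    have hi1 : IntegrableOn (F t) (Ioo (0:ℝ) (σ t)) :=
      hFi.mono_set (Ioo_subset_Ioo le_rfl (le_trans hσM hML))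
    have hi2 : IntegrableOn (F t) (Ico (σ t) (β * t * Real.exp (-L))) := by
      apply hFi.mono_set
      intro u hu
      exact ⟨lt_of_lt_of_le hσ0 hu.1, lt_of_lt_of_le hu.2 hML⟩
    calc Real.log t ^ k * ∫ u in Ioo (0:ℝ) (β * t * Real.exp (-L)), G t u
        = ∫ u in Ioo (0:ℝ) (β * t * Real.exp (-L)), F t u := by
          rw [hFdef]
          exact (MeasureTheory.integral_const_mul _ _).symm
      _ = ∫ u in Ioo (0:ℝ) (σ t) ∪ Ico (σ t) (β * t * Real.exp (-L)), F t u := by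
          rw [hunion]
      _ = A t + B t := setIntegral_union hdisj measurableSet_Ico hi1 hi2
  -- Part A: dominated convergence
  have hA : Tendsto A atTop (𝓝 (Real.Gamma c)) := by
    have hGamma : Real.Gamma c = ∫ u in Ioi (0:ℝ), u ^ (c - 1) * Real.exp (-u) := by
      rw [Real.Gamma_eq_integral hc]
      exact setIntegral_congr_fun measurableSet_Ioi (fun u _ => mul_comm _ _)
    have hAeq : ∀ t : ℝ, A t =
        ∫ u, (Ioo (0:ℝ) (σ t)).indicator (F t) u ∂(volume.restrict (Ioi 0)) := by
      intro t
      rw [MeasureTheory.integral_indicator measurableSet_Ioo,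
        Measure.restrict_restrict measurableSet_Ioo,
        inter_eq_left.mpr Ioo_subset_Ioi_self]
    have h_meas : ∀ᶠ t : ℝ in atTop, AEStronglyMeasurable
        (fun u => (Ioo (0:ℝ) (σ t)).indicator (F t) u) (volume.restrict (Ioi 0)) := by
      filter_upwards [ev1, ev2] with t ht hσM
      rw [aestronglyMeasurable_indicator_iff measurableSet_Ioo]
      have ht0 : (0:ℝ) < t := by linarith
      have hsub : Ioo (0:ℝ) (σ t) ⊆ {u : ℝ | 0 < u ∧ u < β * t} := by
        intro u hu
        refine ⟨hu.1, lt_of_lt_of_le hu.2 (le_trans hσM ?_)⟩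
        calc β * t * Real.exp (-L) ≤ β * t * 1 := by
              apply mul_le_mul_of_nonneg_left _ (mul_pos hβ ht0).le
              apply Real.exp_le_one_iff.mpr; linarith
          _ = β * t := mul_one _
      have hcont : ContinuousOn (F t) (Ioo (0:ℝ) (σ t)) := by
        rw [hFdef]
        exact (continuousOn_const.mul (contG.mono hsub))
      rw [Measure.restrict_restrict measurableSet_Ioo,
        inter_eq_left.mpr Ioo_subset_Ioi_self]
      exact hcont.aestronglyMeasurable measurableSet_Ioo
    have h_bound : ∀ᶠ t : ℝ in atTop, ∀ᵐ u ∂(volume.restrict (Ioi (0:ℝ))),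
        ‖(Ioo (0:ℝ) (σ t)).indicator (F t) u‖ ≤ (4:ℝ) ^ k * (Real.exp (-u) * u ^ (c - 1)) := by
      filter_upwards [ev1, ev3] with t ht hlog
      rw [ae_restrict_iff' measurableSet_Ioi]
      filter_upwards with u hu
      have hu0 : (0:ℝ) < u := hu
      have hbnd0 : (0:ℝ) ≤ (4:ℝ) ^ k * (Real.exp (-u) * u ^ (c - 1)) := by positivity
      by_cases hmem : u ∈ Ioo (0:ℝ) (σ t)
      · rw [indicator_of_mem hmem]
        have ht0 : (0:ℝ) < t := by linarith
        have hlt : 0 < Real.log t := by linarith [hlog.2]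
        have hlogu : Real.log u ≤ (1/2) * Real.log t := by
          calc Real.log u ≤ Real.log (σ t) := Real.log_le_log hu0 hmem.2.le
            _ = (1/2) * Real.log t := Real.log_rpow ht0 _
        have hlogβt : Real.log (β * t / u) = Real.log β + Real.log t - Real.log u := by
          rw [Real.log_div (by positivity) (ne_of_gt hu0),
            Real.log_mul (ne_of_gt hβ) (ne_of_gt ht0)]
        have hkey : (1/4) * Real.log t ≤ Real.log (β * t / u) := by
          rw [hlogβt]
          have := hlog.1
          linarith
        have hqt : (0:ℝ) < (1/4) * Real.log t := by linarith
        have h1 : Real.log (β * t / u) ^ (-k) ≤ ((1/4) * Real.log t) ^ (-k) :=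
          Real.rpow_le_rpow_of_nonpos hqt hkey (neg_nonpos.mpr hk)
        have h2 : ((1/4) * Real.log t : ℝ) ^ (-k)
            = (4:ℝ) ^ k * Real.log t ^ (-k) := by
          rw [Real.mul_rpow (by norm_num) hlt.le]
          congr 1
          rw [show ((1:ℝ)/4) = ((4:ℝ))⁻¹ by norm_num, Real.inv_rpow (by norm_num),
            ← Real.rpow_neg (by norm_num), neg_neg]
        have h3 : Real.log t ^ k * Real.log t ^ (-k) = 1 := by
          rw [← Real.rpow_add hlt]
          simp
        have hFnn : 0 ≤ F t u := by
          rw [hFdef, hGdef]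
          have : (0:ℝ) < Real.log (β * t / u) := lt_of_lt_of_le hqt hkey
          positivity
        rw [Real.norm_of_nonneg hFnn]
        rw [hFdef, hGdef]
        simp only []
        calc Real.log t ^ k * (Real.log (β * t / u) ^ (-k) * u ^ (c - 1) * Real.exp (-u))
            ≤ Real.log t ^ k * (((1/4) * Real.log t) ^ (-k) * u ^ (c - 1) * Real.exp (-u)) := by
              apply mul_le_mul_of_nonneg_left _ (Real.rpow_nonneg hlt.le _)
              apply mul_le_mul_of_nonneg_right _ (Real.exp_nonneg _)
              exact mul_le_mul_of_nonneg_right h1 (Real.rpow_nonneg hu0.le _)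
          _ = (Real.log t ^ k * Real.log t ^ (-k)) * ((4:ℝ) ^ k * (Real.exp (-u) * u ^ (c - 1))) := by
              rw [h2]; ring
          _ = (4:ℝ) ^ k * (Real.exp (-u) * u ^ (c - 1)) := by rw [h3, one_mul]
      · rw [indicator_of_notMem hmem]
        simpa using hbnd0
    have h_int : Integrable (fun u : ℝ => (4:ℝ) ^ k * (Real.exp (-u) * u ^ (c - 1)))
        (volume.restrict (Ioi 0)) := (Real.GammaIntegral_convergent hc).const_mul _
    have h_lim : ∀ᵐ u ∂(volume.restrict (Ioi (0:ℝ))),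
        Tendsto (fun t : ℝ => (Ioo (0:ℝ) (σ t)).indicator (F t) u) atTop
          (𝓝 (u ^ (c - 1) * Real.exp (-u))) := by
      rw [ae_restrict_iff' measurableSet_Ioi]
      filter_upwards with u hu
      have hu0 : (0:ℝ) < u := hu
      have hd : ∀ᶠ t : ℝ in atTop, Real.log (β * t / u) = Real.log t + Real.log (β / u) := by
        filter_upwards [ev1] with t ht
        rw [show β * t / u = t * (β / u) by ring,
          Real.log_mul (by linarith) (ne_of_gt (div_pos hβ hu0))]
      set d := Real.log (β / u) with hdd
      have hratio : Tendsto (fun t : ℝ => Real.log t / (Real.log t + d)) atTop (𝓝 1) := by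
        have h0 : Tendsto (fun s : ℝ => d / (s + d)) atTop (𝓝 0) :=
          Tendsto.div_atTop tendsto_const_nhds (tendsto_atTop_add_const_right _ d tendsto_id)
        have h1 : Tendsto (fun s : ℝ => 1 - d / (s + d)) atTop (𝓝 1) := by
          simpa using tendsto_const_nhds.sub h0
        have h2 : Tendsto (fun s : ℝ => s / (s + d)) atTop (𝓝 1) := by
          apply h1.congr'
          filter_upwards [eventually_gt_atTop (max 0 (-d) + 1)] with s hs
          have hsd : 0 < s + d := by
            have := le_max_right 0 (-d)
            have := le_max_left 0 (-d)
            linarith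
          field_simp
          ring
        exact h2.comp Real.tendsto_log_atTop
      have hratk : Tendsto (fun t : ℝ => (Real.log t / (Real.log t + d)) ^ k) atTop (𝓝 1) := by
        have hco : ContinuousAt (fun x : ℝ => x ^ k) 1 :=
          Real.continuousAt_rpow_const 1 k (Or.inl one_ne_zero)
        have := hco.tendsto.comp hratio
        simpa [Real.one_rpow, Function.comp_def] using this
      have hfin : Tendsto (fun t : ℝ => (Real.log t / (Real.log t + d)) ^ k
          * (u ^ (c - 1) * Real.exp (-u))) atTop (𝓝 (u ^ (c - 1) * Real.exp (-u))) := by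
        simpa using hratk.mul_const (u ^ (c - 1) * Real.exp (-u))
      apply hfin.congr'
      have hσu : ∀ᶠ t : ℝ in atTop, u < σ t :=
        (tendsto_rpow_atTop one_half_pos).eventually_gt_atTop u
      have hlogu' : ∀ᶠ t : ℝ in atTop, Real.log u ≤ (1/2) * Real.log t := by
        filter_upwards [ev1, hσu] with t ht hσut
        calc Real.log u ≤ Real.log (σ t) := Real.log_le_log hu0 hσut.le
          _ = (1/2) * Real.log t := Real.log_rpow (by linarith) _
      filter_upwards [ev1, ev3, hd, hσu, hlogu'] with t ht hlog hdt hσut hlu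
      have ht0 : (0:ℝ) < t := by linarith
      have hlt : 0 < Real.log t := by linarith [hlog.2]
      have hmem : u ∈ Ioo (0:ℝ) (σ t) := ⟨hu0, hσut⟩
      have hpos2 : 0 < Real.log t + d := by
        rw [← hdt]
        have hlogβt : Real.log (β * t / u) = Real.log β + Real.log t - Real.log u := by
          rw [Real.log_div (by positivity) (ne_of_gt hu0),
            Real.log_mul (ne_of_gt hβ) (ne_of_gt ht0)]
        rw [hlogβt]
        have := hlog.1
        linarith
      rw [indicator_of_mem hmem, hFdef, hGdef]
      simp only []
      rw [hdt]
      rw [Real.div_rpow hlt.le (by linarith : (0:ℝ) ≤ Real.log t + d)]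
      rw [div_eq_mul_inv, ← Real.rpow_neg (by linarith : (0:ℝ) ≤ Real.log t + d)]
      ring
    have hDCT := MeasureTheory.tendsto_integral_filter_of_dominated_convergence
      _ h_meas h_bound h_int h_lim
    rw [hGamma]
    exact hDCT.congr (fun t => (hAeq t).symm)
  -- Part B: the tail is negligible
  have hK2int : IntegrableOn (fun u : ℝ => u ^ (c - 1) * Real.exp (-(1/2 : ℝ) * u)) (Ioi 0) := by
    have h := integrableOn_rpow_mul_exp_neg_mul_rpow
      (p := 1) (s := c - 1) (b := 1/2) (by linarith) (by norm_num) (by norm_num)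
    apply h.congr_fun ?_ measurableSet_Ioi
    intro x hx
    simp [Real.rpow_one]
  set K2 : ℝ := ∫ u in Ioi (0:ℝ), u ^ (c - 1) * Real.exp (-(1/2 : ℝ) * u) with hK2def
  have hK2nn : 0 ≤ K2 := by
    apply setIntegral_nonneg measurableSet_Ioi
    intro u hu
    exact mul_nonneg (Real.rpow_nonneg (le_of_lt hu) _) (Real.exp_nonneg _)
  have hBnn : ∀ᶠ t : ℝ in atTop, 0 ≤ B t := by
    filter_upwards [ev1, ev3] with t ht hlog
    have ht0 : (0:ℝ) < t := by linarith
    apply setIntegral_nonneg measurableSet_Ico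
    intro u hu
    have hu0 : 0 < u := lt_of_lt_of_le (hσpos t ht0) hu.1
    have hL' : L ≤ Real.log (β * t / u) := by
      have : Real.exp L ≤ β * t / u := by
        rw [le_div_iff₀ hu0]
        calc Real.exp L * u ≤ Real.exp L * (β * t * Real.exp (-L)) :=
              mul_le_mul_of_nonneg_left hu.2.le (Real.exp_pos _).le
          _ = β * t * (Real.exp L * Real.exp (-L)) := by ring
          _ = β * t := by rw [← Real.exp_add]; simp
      calc L = Real.log (Real.exp L) := (Real.log_exp _).symm
        _ ≤ Real.log (β * t / u) := Real.log_le_log (Real.exp_pos _) this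
    have hpos : (0:ℝ) < Real.log (β * t / u) := lt_of_lt_of_le hL hL'
    rw [hFdef, hGdef]
    have h1 : (0:ℝ) ≤ Real.log t := by linarith [hlog.2]
    positivity
  have hBle : ∀ᶠ t : ℝ in atTop,
      B t ≤ (2:ℝ) ^ k * L ^ (-k) * K2 * (σ t ^ k * Real.exp (-(1/2 : ℝ) * σ t)) := by
    filter_upwards [ev1, ev2, ev3, hFint] with t ht hσM hlog hFi
    have ht0 : (0:ℝ) < t := by linarith
    have hσ0 : 0 < σ t := hσpos t ht0
    have hlt0 : (0:ℝ) ≤ Real.log t := by linarith [hlog.2]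
    set Mt := β * t * Real.exp (-L) with hMt
    have hsubIoi : Ico (σ t) Mt ⊆ Ioi (0:ℝ) := fun u hu => lt_of_lt_of_le hσ0 hu.1
    set cst : ℝ := Real.log t ^ k * L ^ (-k) * Real.exp (-(1/2 : ℝ) * σ t) with hcst
    have hcstnn : 0 ≤ cst := by
      rw [hcst]
      have := Real.rpow_nonneg hlt0 k
      positivity
    have hbd : ∀ u ∈ Ico (σ t) Mt,
        F t u ≤ cst * (u ^ (c - 1) * Real.exp (-(1/2 : ℝ) * u)) := by
      intro u hu
      have hu0 : 0 < u := lt_of_lt_of_le hσ0 hu.1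
      have hL' : L ≤ Real.log (β * t / u) := by
        have : Real.exp L ≤ β * t / u := by
          rw [le_div_iff₀ hu0]
          calc Real.exp L * u ≤ Real.exp L * (β * t * Real.exp (-L)) :=
                mul_le_mul_of_nonneg_left hu.2.le (Real.exp_pos _).le
            _ = β * t * (Real.exp L * Real.exp (-L)) := by ring
            _ = β * t := by rw [← Real.exp_add]; simp
        calc L = Real.log (Real.exp L) := (Real.log_exp _).symm
          _ ≤ Real.log (β * t / u) := Real.log_le_log (Real.exp_pos _) this
      have h1 : Real.log (β * t / u) ^ (-k) ≤ L ^ (-k) :=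
        Real.rpow_le_rpow_of_nonpos hL hL' (neg_nonpos.mpr hk)
      have h2 : Real.exp (-u) ≤ Real.exp (-(1/2 : ℝ) * σ t) * Real.exp (-(1/2 : ℝ) * u) := by
        rw [← Real.exp_add]
        apply Real.exp_le_exp.mpr
        have := hu.1
        linarith
      rw [hFdef, hGdef]
      simp only []
      calc Real.log t ^ k * (Real.log (β * t / u) ^ (-k) * u ^ (c - 1) * Real.exp (-u))
          ≤ Real.log t ^ k * (L ^ (-k) * u ^ (c - 1) *
              (Real.exp (-(1/2 : ℝ) * σ t) * Real.exp (-(1/2 : ℝ) * u))) := by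
            apply mul_le_mul_of_nonneg_left _ (Real.rpow_nonneg hlt0 _)
            apply mul_le_mul
            · exact mul_le_mul_of_nonneg_right h1 (Real.rpow_nonneg hu0.le _)
            · exact h2
            · exact Real.exp_nonneg _
            · have := Real.rpow_nonneg hu0.le (c - 1)
              have := Real.rpow_nonneg (le_of_lt hL) (-k)
              positivity
        _ = cst * (u ^ (c - 1) * Real.exp (-(1/2 : ℝ) * u)) := by
            rw [hcst]; ring
    have hint2 : IntegrableOn (fun u : ℝ => cst * (u ^ (c - 1) * Real.exp (-(1/2 : ℝ) * u)))
        (Ico (σ t) Mt) := (hK2int.mono_set hsubIoi).const_mul _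
    have hFiIco : IntegrableOn (F t) (Ico (σ t) Mt) := by
      apply hFi.mono_set
      intro u hu
      refine ⟨lt_of_lt_of_le hσ0 hu.1, lt_of_lt_of_le hu.2 ?_⟩
      rw [hMt]
      apply mul_le_mul_of_nonneg_left _ (mul_pos hβ ht0).le
      apply Real.exp_le_exp.mpr; linarith
    calc B t ≤ ∫ u in Ico (σ t) Mt, cst * (u ^ (c - 1) * Real.exp (-(1/2 : ℝ) * u)) := by
          rw [hBdef]
          exact setIntegral_mono_on hFiIco hint2 measurableSet_Ico hbd
      _ ≤ ∫ u in Ioi (0:ℝ), cst * (u ^ (c - 1) * Real.exp (-(1/2 : ℝ) * u)) := by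
          apply setIntegral_mono_set (hK2int.const_mul _)
          · refine (ae_restrict_iff' measurableSet_Ioi).mpr (Filter.Eventually.of_forall ?_)
            intro u hu
            exact mul_nonneg hcstnn
              (mul_nonneg (Real.rpow_nonneg (le_of_lt hu) _) (Real.exp_nonneg _))
          · exact HasSubset.Subset.eventuallyLE hsubIoi
      _ = cst * K2 := by rw [hK2def]; exact integral_const_mul _ _
      _ ≤ (2:ℝ) ^ k * L ^ (-k) * K2 * (σ t ^ k * Real.exp (-(1/2 : ℝ) * σ t)) := by
          rw [hcst]
          have hlog2 : Real.log t ^ k ≤ (2:ℝ) ^ k * σ t ^ k := by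
            have hlogσ : Real.log (σ t) = (1/2) * Real.log t := Real.log_rpow ht0 _
            have hup : Real.log t ≤ 2 * σ t := by
              have := Real.log_le_sub_one_of_pos hσ0
              linarith
            calc Real.log t ^ k ≤ (2 * σ t) ^ k := Real.rpow_le_rpow hlt0 hup hk
              _ = (2:ℝ) ^ k * σ t ^ k := Real.mul_rpow (by norm_num) hσ0.le
          have hLk := Real.rpow_nonneg (le_of_lt hL) (-k)
          have hexpnn := Real.exp_nonneg (-(1/2 : ℝ) * σ t)
          have hσk := Real.rpow_nonneg hσ0.le k
          calc Real.log t ^ k * L ^ (-k) * Real.exp (-(1/2 : ℝ) * σ t) * K2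
              ≤ ((2:ℝ) ^ k * σ t ^ k) * L ^ (-k) * Real.exp (-(1/2 : ℝ) * σ t) * K2 := by
                apply mul_le_mul_of_nonneg_right _ hK2nn
                apply mul_le_mul_of_nonneg_right _ hexpnn
                exact mul_le_mul_of_nonneg_right hlog2 hLk
            _ = (2:ℝ) ^ k * L ^ (-k) * K2 * (σ t ^ k * Real.exp (-(1/2 : ℝ) * σ t)) := by ring
  have hg0 : Tendsto (fun t : ℝ =>
      (2:ℝ) ^ k * L ^ (-k) * K2 * (σ t ^ k * Real.exp (-(1/2 : ℝ) * σ t))) atTop (𝓝 0) := by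
    have hcomp : Tendsto (fun t : ℝ => σ t ^ k * Real.exp (-(1/2 : ℝ) * σ t)) atTop (𝓝 0) :=
      (tendsto_rpow_mul_exp_neg_mul_atTop_nhds_zero k (1/2) (by norm_num)).comp
        (tendsto_rpow_atTop one_half_pos)
    simpa using hcomp.const_mul ((2:ℝ) ^ k * L ^ (-k) * K2)
  have hB0 : Tendsto B atTop (𝓝 0) := squeeze_zero' hBnn hBle hg0
  have hsum := hA.add hB0
  rw [add_zero] at hsum
  exact hsum.congr' (hsplit.mono fun t h => h.symm)
end

section
variable {L c k t : ℝ}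

/-- Lower comparison: the integral is at most the sum. -/
lemma sum_lower (hL : 0 < L) (hcL : 0 < c * L) (hk : 0 ≤ k) (ht : 0 ≤ t)
    (hsum : Summable (fun i : ℕ => ((i:ℝ)+1) ^ (-k) * Real.exp (-(c*L)*((i:ℝ)+1)) *
      Real.exp (-Real.exp (-(L*((i:ℝ)+1))) * t))) :
    ∫ x in Ioi (1:ℝ), x ^ (-k) * Real.exp (-(c*L)*x) *
        Real.exp (-(Real.exp L * t * Real.exp (-(L*x)))) ≤
    ∑' i : ℕ, ((i:ℝ)+1) ^ (-k) * Real.exp (-(c*L)*((i:ℝ)+1)) *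
      Real.exp (-Real.exp (-(L*((i:ℝ)+1))) * t) := by
  set f : ℕ → ℝ := fun i => ((i:ℝ)+1) ^ (-k) * Real.exp (-(c*L)*((i:ℝ)+1)) *
      Real.exp (-Real.exp (-(L*((i:ℝ)+1))) * t) with hfdef
  set ℓ : ℝ → ℝ := fun x => x ^ (-k) * Real.exp (-(c*L)*x) *
      Real.exp (-(Real.exp L * t * Real.exp (-(L*x)))) with hℓdef
  have hfnn : ∀ i : ℕ, 0 ≤ f i := by
    intro i
    rw [hfdef]
    have : (0:ℝ) ≤ (i:ℝ) + 1 := by positivity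
    positivity
  have hInt : IntegrableOn ℓ (Ioi 1) := intL hcL hk (by positivity)
  have hII : ∀ i : ℕ, IntervalIntegrable ℓ volume ((i:ℝ)+1) ((i:ℝ)+2) := by
    intro i
    rw [intervalIntegrable_iff_integrableOn_Ioc_of_le (by linarith [Nat.cast_nonneg (α := ℝ) i])]
    apply hInt.mono_set
    intro x hx
    have := Nat.cast_nonneg (α := ℝ) i
    exact lt_of_le_of_lt (by linarith : (1:ℝ) ≤ (i:ℝ)+1) hx.1
  have key : ∀ i : ℕ, ∫ x in ((i:ℝ)+1)..((i:ℝ)+2), ℓ x ≤ f i := by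
    intro i
    have hj1 : (1:ℝ) ≤ (i:ℝ)+1 := by
      have := Nat.cast_nonneg (α := ℝ) i; linarith
    have hj0 : (0:ℝ) < (i:ℝ)+1 := by linarith
    have hmono : ∀ x ∈ Icc ((i:ℝ)+1) ((i:ℝ)+2), ℓ x ≤ f i := by
      intro x hx
      have hx0 : (0:ℝ) < x := lt_of_lt_of_le hj0 hx.1
      have h1 : x ^ (-k) ≤ ((i:ℝ)+1) ^ (-k) :=
        Real.rpow_le_rpow_of_nonpos hj0 hx.1 (neg_nonpos.mpr hk)
      have h2 : Real.exp (-(c*L)*x) ≤ Real.exp (-(c*L)*((i:ℝ)+1)) := by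
        apply Real.exp_le_exp.mpr
        have := hx.1
        nlinarith
      have h3 : Real.exp (-(Real.exp L * t * Real.exp (-(L*x)))) ≤
          Real.exp (-Real.exp (-(L*((i:ℝ)+1))) * t) := by
        apply Real.exp_le_exp.mpr
        rw [neg_mul, neg_le_neg_iff]
        have hexp : Real.exp (-(L*((i:ℝ)+1))) ≤ Real.exp L * Real.exp (-(L*x)) := by
          rw [← Real.exp_add]
          apply Real.exp_le_exp.mpr
          have := hx.2
          nlinarith
        calc Real.exp (-(L*((i:ℝ)+1))) * t ≤ Real.exp L * Real.exp (-(L*x)) * t :=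
              mul_le_mul_of_nonneg_right hexp ht
          _ = Real.exp L * t * Real.exp (-(L*x)) := by ring
      rw [hℓdef, hfdef]
      simp only []
      have e2 := Real.exp_nonneg (-(c*L)*x)
      have e3 := Real.exp_nonneg (-(Real.exp L * t * Real.exp (-(L*x))))
      apply mul_le_mul _ h3 e3 (by positivity)
      exact mul_le_mul h1 h2 e2 (Real.rpow_nonneg hj0.le _)
    have hIc : IntervalIntegrable (fun _ : ℝ => f i) volume ((i:ℝ)+1) ((i:ℝ)+2) :=
      intervalIntegrable_const
    calc ∫ x in ((i:ℝ)+1)..((i:ℝ)+2), ℓ x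
        ≤ ∫ _x in ((i:ℝ)+1)..((i:ℝ)+2), f i := by
          apply intervalIntegral.integral_mono_on (by linarith) (hII i) hIc
          intro x hx
          exact hmono x hx
      _ = f i := by
          rw [intervalIntegral.integral_const]
          rw [smul_eq_mul]
          norm_num
  have hsumN : ∀ N : ℕ, ∫ x in (1:ℝ)..((N:ℝ)+1), ℓ x ≤ ∑' i : ℕ, f i := by
    intro N
    have hadj : ∑ i ∈ Finset.range N, (∫ x in (((i:ℕ):ℝ)+1)..((((i+1):ℕ):ℝ)+1), ℓ x)
        = ∫ x in (((0:ℕ):ℝ)+1)..(((N:ℕ):ℝ)+1), ℓ x := by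
      apply intervalIntegral.sum_integral_adjacent_intervals (a := fun i : ℕ => ((i:ℕ):ℝ)+1)
      intro i _
      have := hII i
      rwa [show (((i+1):ℕ):ℝ)+1 = (i:ℝ)+2 by push_cast; ring]
    calc ∫ x in (1:ℝ)..((N:ℝ)+1), ℓ x
        = ∑ i ∈ Finset.range N, (∫ x in (((i:ℕ):ℝ)+1)..((((i+1):ℕ):ℝ)+1), ℓ x) := by
          rw [hadj]; norm_num
      _ ≤ ∑ i ∈ Finset.range N, f i := by
          apply Finset.sum_le_sum
          intro i _
          have := key i
          rwa [show (((i+1):ℕ):ℝ)+1 = (i:ℝ)+2 by push_cast; ring]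
      _ ≤ ∑' i : ℕ, f i := Summable.sum_le_tsum _ (fun i _ => hfnn i) hsum
  have hlim : Tendsto (fun N : ℕ => ∫ x in (1:ℝ)..((N:ℝ)+1), ℓ x) atTop
      (𝓝 (∫ x in Ioi (1:ℝ), ℓ x)) :=
    intervalIntegral_tendsto_integral_Ioi 1 hInt
      (tendsto_atTop_add_const_right _ 1 tendsto_natCast_atTop_atTop)
  exact le_of_tendsto hlim (Eventually.of_forall hsumN)
/-- Upper comparison: the sum is at most the first term plus the integral. -/
lemma sum_upper (hL : 0 < L) (hcL : 0 < c * L) (hk : 0 ≤ k) (ht : 0 ≤ t)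
    (hsum : Summable (fun i : ℕ => ((i:ℝ)+1) ^ (-k) * Real.exp (-(c*L)*((i:ℝ)+1)) *
      Real.exp (-Real.exp (-(L*((i:ℝ)+1))) * t))) :
    ∑' i : ℕ, ((i:ℝ)+1) ^ (-k) * Real.exp (-(c*L)*((i:ℝ)+1) ) *
      Real.exp (-Real.exp (-(L*((i:ℝ)+1))) * t) ≤
    (((0:ℕ):ℝ)+1) ^ (-k) * Real.exp (-(c*L)*(((0:ℕ):ℝ)+1)) *
      Real.exp (-Real.exp (-(L*(((0:ℕ):ℝ)+1))) * t) +
    ∫ x in Ioi (1:ℝ), x ^ (-k) * Real.exp (-(c*L)*x) *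
      Real.exp (-(Real.exp (-L) * t * Real.exp (-(L*x)))) := by
  set f : ℕ → ℝ := fun i => ((i:ℝ)+1) ^ (-k) * Real.exp (-(c*L)*((i:ℝ)+1)) *
      Real.exp (-Real.exp (-(L*((i:ℝ)+1))) * t) with hfdef
  set m : ℝ → ℝ := fun x => x ^ (-k) * Real.exp (-(c*L)*x) *
      Real.exp (-(Real.exp (-L) * t * Real.exp (-(L*x)))) with hmdef
  have hfnn : ∀ i : ℕ, 0 ≤ f i := by
    intro i
    rw [hfdef]
    have : (0:ℝ) ≤ (i:ℝ) + 1 := by positivity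
    positivity
  have hInt : IntegrableOn m (Ioi 1) := intL hcL hk (by positivity)
  have hII : ∀ i : ℕ, IntervalIntegrable m volume ((i:ℝ)+1) ((i:ℝ)+2) := by
    intro i
    rw [intervalIntegrable_iff_integrableOn_Ioc_of_le (by linarith [Nat.cast_nonneg (α := ℝ) i])]
    apply hInt.mono_set
    intro x hx
    have := Nat.cast_nonneg (α := ℝ) i
    exact lt_of_le_of_lt (by linarith : (1:ℝ) ≤ (i:ℝ)+1) hx.1
  have key : ∀ i : ℕ, f (i+1) ≤ ∫ x in ((i:ℝ)+1)..((i:ℝ)+2), m x := by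
    intro i
    have hj1 : (1:ℝ) ≤ (i:ℝ)+1 := by
      have := Nat.cast_nonneg (α := ℝ) i; linarith
    have hj0 : (0:ℝ) < (i:ℝ)+1 := by linarith
    have hfval : f (i+1) = ((i:ℝ)+2) ^ (-k) * Real.exp (-(c*L)*((i:ℝ)+2)) *
        Real.exp (-Real.exp (-(L*((i:ℝ)+2))) * t) := by
      rw [hfdef]
      push_cast
      ring_nf
    have hmono : ∀ x ∈ Icc ((i:ℝ)+1) ((i:ℝ)+2), f (i+1) ≤ m x := by
      intro x hx
      have hx0 : (0:ℝ) < x := lt_of_lt_of_le hj0 hx.1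
      have h1 : ((i:ℝ)+2) ^ (-k) ≤ x ^ (-k) :=
        Real.rpow_le_rpow_of_nonpos hx0 hx.2 (neg_nonpos.mpr hk)
      have h2 : Real.exp (-(c*L)*((i:ℝ)+2)) ≤ Real.exp (-(c*L)*x) := by
        apply Real.exp_le_exp.mpr
        have := hx.2
        nlinarith
      have h3 : Real.exp (-Real.exp (-(L*((i:ℝ)+2))) * t) ≤
          Real.exp (-(Real.exp (-L) * t * Real.exp (-(L*x)))) := by
        apply Real.exp_le_exp.mpr
        rw [neg_mul, neg_le_neg_iff]
        have hexp : Real.exp (-L) * Real.exp (-(L*x)) ≤ Real.exp (-(L*((i:ℝ)+2))) := by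
          rw [← Real.exp_add]
          apply Real.exp_le_exp.mpr
          have := hx.1
          nlinarith
        calc Real.exp (-L) * t * Real.exp (-(L*x))
            = Real.exp (-L) * Real.exp (-(L*x)) * t := by ring
          _ ≤ Real.exp (-(L*((i:ℝ)+2))) * t := mul_le_mul_of_nonneg_right hexp ht
      rw [hfval, hmdef]
      simp only []
      have e2 := Real.exp_nonneg (-(c*L)*((i:ℝ)+2))
      have e3 := Real.exp_nonneg (-Real.exp (-(L*((i:ℝ)+2))) * t)
      apply mul_le_mul _ h3 e3 (by positivity)
      exact mul_le_mul h1 h2 e2 (Real.rpow_nonneg hx0.le _)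
    have hIc : IntervalIntegrable (fun _ : ℝ => f (i+1)) volume ((i:ℝ)+1) ((i:ℝ)+2) :=
      intervalIntegrable_const
    calc f (i+1) = ∫ _x in ((i:ℝ)+1)..((i:ℝ)+2), f (i+1) := by
          rw [intervalIntegral.integral_const, smul_eq_mul]
          norm_num
      _ ≤ ∫ x in ((i:ℝ)+1)..((i:ℝ)+2), m x := by
          apply intervalIntegral.integral_mono_on (by linarith) hIc (hII i)
          intro x hx
          exact hmono x hx
  have hmnnIoi : ∀ x ∈ Ioi (1:ℝ), 0 ≤ m x := by
    intro x hx
    have hx0 : (0:ℝ) < x := lt_trans one_pos hx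
    rw [hmdef]
    positivity
  have hsumN : ∀ N : ℕ, ∑ i ∈ Finset.range N, f (i+1) ≤ ∫ x in Ioi (1:ℝ), m x := by
    intro N
    have hadj : ∑ i ∈ Finset.range N, (∫ x in (((i:ℕ):ℝ)+1)..((((i+1):ℕ):ℝ)+1), m x)
        = ∫ x in (((0:ℕ):ℝ)+1)..(((N:ℕ):ℝ)+1), m x := by
      apply intervalIntegral.sum_integral_adjacent_intervals (a := fun i : ℕ => ((i:ℕ):ℝ)+1)
      intro i _
      have := hII i
      rwa [show (((i+1):ℕ):ℝ)+1 = (i:ℝ)+2 by push_cast; ring]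
    calc ∑ i ∈ Finset.range N, f (i+1)
        ≤ ∑ i ∈ Finset.range N, (∫ x in (((i:ℕ):ℝ)+1)..((((i+1):ℕ):ℝ)+1), m x) := by
          apply Finset.sum_le_sum
          intro i _
          rw [show (((i+1):ℕ):ℝ)+1 = (i:ℝ)+2 by push_cast; ring]
          exact key i
      _ = ∫ x in (((0:ℕ):ℝ)+1)..(((N:ℕ):ℝ)+1), m x := hadj
      _ = ∫ x in Ioc (1:ℝ) ((N:ℝ)+1), m x := by
          rw [intervalIntegral.integral_of_le (by push_cast; linarith [Nat.cast_nonneg (α := ℝ) N])]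
          norm_num
      _ ≤ ∫ x in Ioi (1:ℝ), m x := by
          apply setIntegral_mono_set hInt
          · refine (ae_restrict_iff' measurableSet_Ioi).mpr (Filter.Eventually.of_forall ?_)
            intro x hx
            exact hmnnIoi x hx
          · exact HasSubset.Subset.eventuallyLE Ioc_subset_Ioi_self
  have hshift : Summable (fun i : ℕ => f (i+1)) := by
    exact_mod_cast (summable_nat_add_iff 1).mpr hsum
  calc ∑' i : ℕ, f i = f 0 + ∑' i : ℕ, f (i+1) := Summable.tsum_eq_zero_add hsum
    _ ≤ f 0 + ∫ x in Ioi (1:ℝ), m x := by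
        apply add_le_add_right
        exact Real.tsum_le_of_sum_range_le (fun i => hfnn _) hsumN
end

open Filter

theorem series_powerlaw_asymptotics
    (a b k c : ℝ) (ha : 1 < a) (hb : 1 < b) (hk : 0 ≤ k)
    (hc : c = Real.log a / Real.log b)
    (S : ℝ → ℝ)
    (hS : ∀ t : ℝ, 0 ≤ t → S t =
      ∑' i : ℕ, ((i : ℝ) + 1) ^ (-k) * a ^ (-((i : ℝ) + 1)) *
        Real.exp (-b ^ (-((i : ℝ) + 1)) * t)) :
    (∀ t : ℝ, 0 ≤ t → Summable (fun i : ℕ =>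
      ((i : ℝ) + 1) ^ (-k) * a ^ (-((i : ℝ) + 1)) *
        Real.exp (-b ^ (-((i : ℝ) + 1)) * t))) ∧
    a⁻¹ * Real.log b ^ (k - 1) * Real.Gamma c ≤
      liminf (fun t : ℝ => S t * t ^ c * Real.log t ^ k) atTop ∧
    limsup (fun t : ℝ => S t * t ^ c * Real.log t ^ k) atTop ≤
      a * Real.log b ^ (k - 1) * Real.Gamma c := by
  have ha0 : (0:ℝ) < a := lt_trans one_pos ha
  have hL : 0 < Real.log b := Real.log_pos hb
  have hcpos : 0 < c := by rw [hc]; exact div_pos (Real.log_pos ha) hL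
  have hcL : c * Real.log b = Real.log a := by rw [hc]; field_simp
  have hcLpos : 0 < c * Real.log b := by rw [hcL]; exact Real.log_pos ha
  have hainv : a⁻¹ = Real.exp (-(c * Real.log b)) := by
    rw [hcL, Real.exp_neg, Real.exp_log ha0]
  -- term rewriting
  have hterm : ∀ t : ℝ, ∀ i : ℕ,
      ((i : ℝ) + 1) ^ (-k) * a ^ (-((i : ℝ) + 1)) * Real.exp (-b ^ (-((i : ℝ) + 1)) * t)
      = ((i:ℝ)+1) ^ (-k) * Real.exp (-(c * Real.log b)*((i:ℝ)+1)) *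
        Real.exp (-Real.exp (-(Real.log b*((i:ℝ)+1))) * t) := by
    intro t i
    have h1 : a ^ (-((i:ℝ)+1)) = Real.exp (-(c * Real.log b)*((i:ℝ)+1)) := by
      rw [Real.rpow_def_of_pos ha0, ← hcL]
      congr 1
      ring
    have h2 : b ^ (-((i:ℝ)+1)) = Real.exp (-(Real.log b*((i:ℝ)+1))) := by
      rw [Real.rpow_def_of_pos (lt_trans one_pos hb)]
      congr 1
      ring
    rw [h1, h2]
  -- summability
  have hsumm : ∀ t : ℝ, 0 ≤ t → Summable (fun i : ℕ =>
      ((i : ℝ) + 1) ^ (-k) * a ^ (-((i : ℝ) + 1)) *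
        Real.exp (-b ^ (-((i : ℝ) + 1)) * t)) := by
    intro t ht
    have hgeo : Summable (fun i : ℕ => a ^ (-((i:ℝ)+1))) := by
      have hr0 : (0:ℝ) ≤ a⁻¹ := by positivity
      have hr1 : a⁻¹ < 1 := inv_lt_one_of_one_lt₀ ha
      have h := (summable_geometric_of_lt_one hr0 hr1).mul_left a⁻¹
      apply h.congr
      intro i
      rw [show -((i:ℝ)+1) = -(((i+1:ℕ):ℝ)) by push_cast; ring,
        Real.rpow_neg ha0.le, Real.rpow_natCast]
      rw [← inv_pow, pow_succ]
      ring
    apply Summable.of_nonneg_of_le _ _ hgeo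
    · intro i
      have h0 : (0:ℝ) ≤ (i:ℝ)+1 := by positivity
      positivity
    · intro i
      have h0 : (0:ℝ) < (i:ℝ)+1 := by positivity
      have h1 : ((i:ℝ)+1) ^ (-k) ≤ 1 :=
        Real.rpow_le_one_of_one_le_of_nonpos (by linarith [Nat.cast_nonneg (α := ℝ) i])
          (neg_nonpos.mpr hk)
      have h3 : Real.exp (-b ^ (-((i:ℝ)+1)) * t) ≤ 1 := by
        apply Real.exp_le_one_iff.mpr
        have := Real.rpow_pos_of_pos (lt_trans one_pos hb) (-((i:ℝ)+1))
        rw [neg_mul, neg_nonpos]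
        positivity
      have hann : (0:ℝ) ≤ a ^ (-((i:ℝ)+1)) := Real.rpow_nonneg ha0.le _
      calc ((i:ℝ)+1) ^ (-k) * a ^ (-((i:ℝ)+1)) * Real.exp (-b ^ (-((i:ℝ)+1)) * t)
          ≤ 1 * a ^ (-((i:ℝ)+1)) * 1 := by
            apply mul_le_mul _ h3 (Real.exp_nonneg _) (by positivity)
            exact mul_le_mul_of_nonneg_right h1 hann
        _ = a ^ (-((i:ℝ)+1)) := by ring
  have hSeq : ∀ t : ℝ, 0 ≤ t → S t = ∑' i : ℕ, ((i:ℝ)+1) ^ (-k) *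
      Real.exp (-(c * Real.log b)*((i:ℝ)+1)) *
      Real.exp (-Real.exp (-(Real.log b*((i:ℝ)+1))) * t) := by
    intro t ht
    rw [hS t ht]
    exact tsum_congr (fun i => hterm t i)
  have hsumf : ∀ t : ℝ, 0 ≤ t → Summable (fun i : ℕ => ((i:ℝ)+1) ^ (-k) *
      Real.exp (-(c * Real.log b)*((i:ℝ)+1)) *
      Real.exp (-Real.exp (-(Real.log b*((i:ℝ)+1))) * t)) :=
    fun t ht => ((hsumm t ht).congr (fun i => hterm t i))
  -- lower eventual bound
  have hlow_ev : ∀ᶠ t : ℝ in atTop,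
      a⁻¹ * Real.log b ^ (k-1) * (Real.log t ^ k *
        ∫ u in Ioo (0:ℝ) (Real.exp (Real.log b) * t * Real.exp (-Real.log b)),
          Real.log (Real.exp (Real.log b) * t / u) ^ (-k) * u ^ (c-1) * Real.exp (-u))
      ≤ S t * t ^ c * Real.log t ^ k := by
    filter_upwards [eventually_ge_atTop (1:ℝ)] with t ht1
    have ht0 : (0:ℝ) < t := lt_of_lt_of_le one_pos ht1
    have htnn : (0:ℝ) ≤ t := ht0.le
    have hlogt : 0 ≤ Real.log t := Real.log_nonneg ht1
    have hCpos : 0 < Real.exp (Real.log b) * t := by positivity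
    have h1 : ∫ x in Ioi (1:ℝ), x ^ (-k) * Real.exp (-(c * Real.log b)*x) *
        Real.exp (-(Real.exp (Real.log b) * t * Real.exp (-(Real.log b * x)))) ≤ S t := by
      rw [hSeq t htnn]
      exact sum_lower hL hcLpos hk htnn (hsumf t htnn)
    have h2 := subst hL hcpos hk hCpos
      (intL hcLpos hk (by positivity)) (intG' hL hcpos hk hCpos) contG
    set J := ∫ u in Ioo (0:ℝ) (Real.exp (Real.log b) * t * Real.exp (-Real.log b)),
      Real.log (Real.exp (Real.log b) * t / u) ^ (-k) * u ^ (c-1) * Real.exp (-u) with hJdef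
    have hCc : (Real.exp (Real.log b) * t) ^ (-c) = a⁻¹ * t ^ (-c) := by
      rw [Real.mul_rpow (Real.exp_pos _).le htnn]
      congr 1
      rw [← Real.exp_mul, hainv]
      congr 1
      ring
    have ht1' : t ^ (-c) * t ^ c = 1 := by
      rw [← Real.rpow_add ht0]; simp
    refine le_trans (le_of_eq ?_) (mul_le_mul_of_nonneg_right
      (mul_le_mul_of_nonneg_right h1 (Real.rpow_nonneg htnn c))
      (Real.rpow_nonneg hlogt k))
    rw [h2, hCc]
    linear_combination (-(a⁻¹ * Real.log b ^ (k-1) * Real.log t ^ k * J)) * ht1'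
  -- upper eventual bound
  have hup_ev : ∀ᶠ t : ℝ in atTop,
      S t * t ^ c * Real.log t ^ k ≤
      (((0:ℕ):ℝ)+1) ^ (-k) * Real.exp (-(c * Real.log b)*(((0:ℕ):ℝ)+1)) *
        Real.exp (-Real.exp (-(Real.log b*(((0:ℕ):ℝ)+1))) * t) * (t ^ c * Real.log t ^ k) +
      a * Real.log b ^ (k-1) * (Real.log t ^ k *
        ∫ u in Ioo (0:ℝ) (Real.exp (-Real.log b) * t * Real.exp (-Real.log b)),
          Real.log (Real.exp (-Real.log b) * t / u) ^ (-k) * u ^ (c-1) * Real.exp (-u)) := by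
    filter_upwards [eventually_ge_atTop (1:ℝ)] with t ht1
    have ht0 : (0:ℝ) < t := lt_of_lt_of_le one_pos ht1
    have htnn : (0:ℝ) ≤ t := ht0.le
    have hlogt : 0 ≤ Real.log t := Real.log_nonneg ht1
    have hCpos : 0 < Real.exp (-Real.log b) * t := by positivity
    have h1 : S t ≤ (((0:ℕ):ℝ)+1) ^ (-k) * Real.exp (-(c * Real.log b)*(((0:ℕ):ℝ)+1)) *
        Real.exp (-Real.exp (-(Real.log b*(((0:ℕ):ℝ)+1))) * t) +
        ∫ x in Ioi (1:ℝ), x ^ (-k) * Real.exp (-(c * Real.log b)*x) *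
          Real.exp (-(Real.exp (-Real.log b) * t * Real.exp (-(Real.log b * x)))) := by
      rw [hSeq t htnn]
      exact sum_upper hL hcLpos hk htnn (hsumf t htnn)
    have h2 := subst hL hcpos hk hCpos
      (intL hcLpos hk (by positivity)) (intG' hL hcpos hk hCpos) contG
    set J := ∫ u in Ioo (0:ℝ) (Real.exp (-Real.log b) * t * Real.exp (-Real.log b)),
      Real.log (Real.exp (-Real.log b) * t / u) ^ (-k) * u ^ (c-1) * Real.exp (-u) with hJdef
    have hCc : (Real.exp (-Real.log b) * t) ^ (-c) = a * t ^ (-c) := by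
      rw [Real.mul_rpow (Real.exp_pos _).le htnn]
      congr 1
      rw [← Real.exp_mul, show -Real.log b * -c = c * Real.log b by ring, hcL,
        Real.exp_log ha0]
    have ht1' : t ^ (-c) * t ^ c = 1 := by
      rw [← Real.rpow_add ht0]; simp
    refine le_trans (mul_le_mul_of_nonneg_right
      (mul_le_mul_of_nonneg_right h1 (Real.rpow_nonneg htnn c))
      (Real.rpow_nonneg hlogt k)) (le_of_eq ?_)
    rw [h2, hCc]
    linear_combination (a * Real.log b ^ (k-1) * Real.log t ^ k * J) * ht1'
  -- the first term of the upper bound tends to zero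
  have hup0 : Tendsto (fun t : ℝ =>
      (((0:ℕ):ℝ)+1) ^ (-k) * Real.exp (-(c * Real.log b)*(((0:ℕ):ℝ)+1)) *
        Real.exp (-Real.exp (-(Real.log b*(((0:ℕ):ℝ)+1))) * t) * (t ^ c * Real.log t ^ k))
      atTop (𝓝 0) := by
    have hg := tendsto_rpow_mul_exp_neg_mul_atTop_nhds_zero (c+k)
      (Real.exp (-(Real.log b*(((0:ℕ):ℝ)+1)))) (Real.exp_pos _)
    apply squeeze_zero' ?_ ?_ hg
    · filter_upwards [eventually_ge_atTop (1:ℝ)] with t ht1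
      have ht0 : (0:ℝ) < t := lt_of_lt_of_le one_pos ht1
      have hlogt : 0 ≤ Real.log t := Real.log_nonneg ht1
      have h0 : (0:ℝ) ≤ (((0:ℕ):ℝ)+1) := by norm_num
      positivity
    · filter_upwards [eventually_ge_atTop (1:ℝ)] with t ht1
      have ht0 : (0:ℝ) < t := lt_of_lt_of_le one_pos ht1
      have hlogt : 0 ≤ Real.log t := Real.log_nonneg ht1
      have e1 : ((((0:ℕ):ℝ))+1) ^ (-k) = 1 := by
        rw [show (((0:ℕ):ℝ))+1 = (1:ℝ) by norm_num, Real.one_rpow]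
      have e2 : Real.exp (-(c * Real.log b)*(((0:ℕ):ℝ)+1)) ≤ 1 := by
        apply Real.exp_le_one_iff.mpr
        rw [show (((0:ℕ):ℝ))+1 = (1:ℝ) by norm_num]
        nlinarith
      have e3 : Real.log t ^ k ≤ t ^ k := by
        apply Real.rpow_le_rpow hlogt _ hk
        have := Real.log_le_sub_one_of_pos ht0
        linarith
      have e4 : t ^ c * Real.log t ^ k ≤ t ^ (c+k) := by
        rw [Real.rpow_add ht0]
        exact mul_le_mul_of_nonneg_left e3 (Real.rpow_nonneg ht0.le c)
      have e5 : (0:ℝ) ≤ t ^ c * Real.log t ^ k := by positivity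
      have e6 := Real.exp_nonneg (-Real.exp (-(Real.log b*(((0:ℕ):ℝ)+1))) * t)
      calc ((((0:ℕ):ℝ))+1) ^ (-k) * Real.exp (-(c * Real.log b)*(((0:ℕ):ℝ)+1)) *
            Real.exp (-Real.exp (-(Real.log b*(((0:ℕ):ℝ)+1))) * t) * (t ^ c * Real.log t ^ k)
          ≤ 1 * 1 * Real.exp (-Real.exp (-(Real.log b*(((0:ℕ):ℝ)+1))) * t) * (t ^ (c+k)) := by
            apply mul_le_mul _ e4 e5 _
            · apply mul_le_mul_of_nonneg_right _ e6
              rw [e1, one_mul]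
              calc Real.exp (-(c * Real.log b)*(((0:ℕ):ℝ)+1)) ≤ 1 := e2
                _ = 1 * 1 := by norm_num
            · positivity
        _ = t ^ (c+k) * Real.exp (-Real.exp (-(Real.log b*(((0:ℕ):ℝ)+1))) * t) := by ring
  have hlow_tend := (mainLimit hL hcpos hk (Real.exp_pos (Real.log b))).const_mul
    (a⁻¹ * Real.log b ^ (k-1))
  have hup_tend' := (mainLimit hL hcpos hk (Real.exp_pos (-Real.log b))).const_mul
    (a * Real.log b ^ (k-1))
  have hupper_tend := hup0.add hup_tend'
  rw [zero_add] at hupper_tend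
  have hΦnn : ∀ᶠ t : ℝ in atTop, 0 ≤ S t * t ^ c * Real.log t ^ k := by
    filter_upwards [eventually_ge_atTop (1:ℝ)] with t ht1
    have ht0 : (0:ℝ) < t := lt_of_lt_of_le one_pos ht1
    have hlogt := Real.log_nonneg ht1
    have hS0 : 0 ≤ S t := by
      rw [hSeq t ht0.le]
      apply tsum_nonneg
      intro i
      have : (0:ℝ) ≤ (i:ℝ)+1 := by positivity
      positivity
    exact mul_nonneg (mul_nonneg hS0 (Real.rpow_nonneg ht0.le c))
      (Real.rpow_nonneg hlogt k)
  refine ⟨hsumm, ?_, ?_⟩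
  · -- liminf bound
    have hcob : IsCoboundedUnder (· ≥ ·) atTop
        (fun t : ℝ => S t * t ^ c * Real.log t ^ k) := by
      apply isCoboundedUnder_ge_of_eventually_le atTop
        (x := a * Real.log b ^ (k-1) * Real.Gamma c + 1)
      filter_upwards [hup_ev, hupper_tend.eventually (eventually_le_nhds
        (lt_add_one (a * Real.log b ^ (k-1) * Real.Gamma c)))] with t h1 h2
      exact le_trans h1 h2
    calc a⁻¹ * Real.log b ^ (k-1) * Real.Gamma c
        = liminf (fun t : ℝ => a⁻¹ * Real.log b ^ (k-1) * (Real.log t ^ k *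
          ∫ u in Ioo (0:ℝ) (Real.exp (Real.log b) * t * Real.exp (-Real.log b)),
            Real.log (Real.exp (Real.log b) * t / u) ^ (-k) * u ^ (c-1) * Real.exp (-u)))
          atTop := (hlow_tend.liminf_eq).symm
      _ ≤ liminf (fun t : ℝ => S t * t ^ c * Real.log t ^ k) atTop :=
          liminf_le_liminf hlow_ev hlow_tend.isBoundedUnder_ge hcob
  · -- limsup bound
    have hcob2 : IsCoboundedUnder (· ≤ ·) atTop
        (fun t : ℝ => S t * t ^ c * Real.log t ^ k) :=
      isCoboundedUnder_le_of_eventually_le atTop hΦnn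
    calc limsup (fun t : ℝ => S t * t ^ c * Real.log t ^ k) atTop
        ≤ limsup (fun t : ℝ =>
          (((0:ℕ):ℝ)+1) ^ (-k) * Real.exp (-(c * Real.log b)*(((0:ℕ):ℝ)+1)) *
            Real.exp (-Real.exp (-(Real.log b*(((0:ℕ):ℝ)+1))) * t) * (t ^ c * Real.log t ^ k) +
          a * Real.log b ^ (k-1) * (Real.log t ^ k *
            ∫ u in Ioo (0:ℝ) (Real.exp (-Real.log b) * t * Real.exp (-Real.log b)),
              Real.log (Real.exp (-Real.log b) * t / u) ^ (-k) * u ^ (c-1) * Real.exp (-u)))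
          atTop := limsup_le_limsup hup_ev hcob2 hupper_tend.isBoundedUnder_le
      _ = a * Real.log b ^ (k-1) * Real.Gamma c := hupper_tend.limsup_eq
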